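/- A bounded linear operator T on H = L²(ℝ, μ) commutes with the orthogonal projections onto S_t⁺ and onto S_t⁻ for every t ∈ ℝ if and only if every vector e_q (q ∈ ℚ) is an eigenvector of T, i.e., for each q ∈ ℚ there exists c ∈ ℂ with T e_q = c • e_q. (This identifies the commutant of the nest 𝒩₁ with the algebra of operators diagonal with respect to the atomic basis.) -/

import Mathlib

open MeasureTheory

/-- The closed subspace of `L²(ν)` of functions vanishing `ν`-a.e. on the set `s`. -/
noncomputable def vanishOn (ν : Measure ℝ) (s : Set ℝ) : Submodule ℂ (Lp ℂ 2 ν) where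
  carrier := {f | (f : ℝ → ℂ) =ᵐ[ν.restrict s] 0}
  add_mem' := by
    intro f g hf hg
    filter_upwards [hf, hg, ae_restrict_of_ae (Lp.coeFn_add f g)] with x hfx hgx hx
    show (↑↑(f + g) : ℝ → ℂ) x = 0
    rw [hx]
    simp only [Pi.add_apply]
    simp [hfx, hgx]
  zero_mem' := by
    filter_upwards [ae_restrict_of_ae (Lp.coeFn_zero ℂ 2 ν)] with x hx
    show (↑↑(0 : Lp ℂ 2 ν) : ℝ → ℂ) x = 0
    simpa using hx
  smul_mem' := by
    intro c f hf
    filter_upwards [hf, ae_restrict_of_ae (Lp.coeFn_smul c f)] with x hfx hx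
    show (↑↑(c • f) : ℝ → ℂ) x = 0
    rw [hx]
    simp [hfx]

/-- The measure `μ = ∑_{q ∈ ℚ} δ_q` on the Borel σ-algebra of `ℝ`. -/
noncomputable def mu : Measure ℝ := Measure.sum fun q : ℚ => Measure.dirac (q : ℝ)

lemma mu_singleton_ne_top (x : ℝ) : mu {x} ≠ ⊤ := by
  have h : mu {x} = ∑' q : ℚ, Measure.dirac (q : ℝ) {x} :=
    Measure.sum_apply _ (measurableSet_singleton x)
  rw [h]
  by_cases hx : ∃ q : ℚ, (q : ℝ) = x
  · obtain ⟨q₀, hq₀⟩ := hx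
    have hs : ∀ q : ℚ, q ≠ q₀ → Measure.dirac (q : ℝ) {x} = 0 := by
      intro q hq
      rw [Measure.dirac_apply]
      have : (q : ℝ) ≠ x := by
        intro h'
        exact hq (by exact_mod_cast hq₀ ▸ h')
      simp [Set.indicator, this]
    rw [tsum_eq_single q₀ hs, Measure.dirac_apply]
    simp [Set.indicator, hq₀]
  · have hs : ∀ q : ℚ, Measure.dirac (q : ℝ) {x} = 0 := by
      intro q
      rw [Measure.dirac_apply]
      have : (q : ℝ) ≠ x := fun h' => hx ⟨q, h'⟩
      simp [Set.indicator, this]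
    simp [hs]

/-- `e q` is the indicator function of the singleton `{q}` as an element of `H = L²(ℝ, μ)`. -/
noncomputable def e (q : ℚ) : Lp ℂ 2 mu :=
  indicatorConstLp 2 (measurableSet_singleton (q : ℝ)) (mu_singleton_ne_top _) (1 : ℂ)

/-- The subspace `S_t⁺ = {f ∈ L²(μ) : f = 0 μ-a.e. on (t, ∞)}`. -/
noncomputable def Splus (t : ℝ) : Submodule ℂ (Lp ℂ 2 mu) := vanishOn mu (Set.Ioi t)

/-- The subspace `S_t⁻ = {f ∈ L²(μ) : f = 0 μ-a.e. on [t, ∞)}`. -/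
noncomputable def Sminus (t : ℝ) : Submodule ℂ (Lp ℂ 2 mu) := vanishOn mu (Set.Ici t)

/-- The subspace `N_t = {f ∈ L²(λ) : f = 0 λ-a.e. on (t, ∞)}` of `K = L²(ℝ, λ)`,
where `λ` is Lebesgue measure. -/
noncomputable def Nt (t : ℝ) : Submodule ℂ (Lp ℂ 2 (volume : Measure ℝ)) :=
  vanishOn volume (Set.Ioi t)

open scoped InnerProductSpace ComplexConjugate

namespace NestAux

lemma ae_mu_iff {p : ℝ → Prop} : (∀ᵐ x ∂mu, p x) ↔ ∀ q : ℚ, p q := by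
  rw [mu, Measure.ae_sum_iff]
  refine forall_congr' fun q => ?_
  rw [ae_dirac_eq]
  exact Filter.eventually_pure

lemma ae_mu_restrict_iff {s : Set ℝ} (hs : MeasurableSet s) {p : ℝ → Prop} :
    (∀ᵐ x ∂mu.restrict s, p x) ↔ ∀ q : ℚ, (q : ℝ) ∈ s → p q := by
  classical
  rw [mu, Measure.restrict_sum _ hs, Measure.ae_sum_iff]
  refine forall_congr' fun q => ?_
  rw [restrict_dirac' hs]
  split_ifs with h
  · rw [ae_dirac_eq]; simp [h]
  · simp [h]

lemma mu_coe_singleton (q : ℚ) : mu {(q : ℝ)} = 1 := by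
  rw [mu, Measure.sum_apply _ (measurableSet_singleton _)]
  rw [tsum_eq_single q (fun p hp => ?_)]
  · simp
  · rw [Measure.dirac_apply]
    have : (p : ℝ) ∉ ({(q : ℝ)} : Set ℝ) := by
      simp only [Set.mem_singleton_iff, Rat.cast_injective.eq_iff]
      exact hp
    simp [this]

lemma coeFn_congr_rat {f g : ℝ → ℂ} (h : f =ᵐ[mu] g) (q : ℚ) : f q = g q :=
  ae_mu_iff.1 h q

lemma ext_rat {f g : Lp ℂ 2 mu} (h : ∀ q : ℚ, (f : ℝ → ℂ) q = (g : ℝ → ℂ) q) : f = g :=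
  Lp.ext (ae_mu_iff.2 h)

lemma e_apply (p q : ℚ) : (e p : ℝ → ℂ) q = if q = p then 1 else 0 := by
  have h := coeFn_congr_rat (indicatorConstLp_coeFn
    (p := 2) (hs := measurableSet_singleton ((p : ℚ) : ℝ)) (hμs := mu_singleton_ne_top _)
    (c := (1 : ℂ))) q
  rw [e, h]
  by_cases hqp : q = p
  · subst hqp; simp
  · have : ((q : ℚ) : ℝ) ∉ ({((p : ℚ) : ℝ)} : Set ℝ) := by
      simp only [Set.mem_singleton_iff, Rat.cast_injective.eq_iff]; exact hqp
    simp [Set.indicator_of_notMem this, hqp]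

lemma smul_apply_rat (c : ℂ) (f : Lp ℂ 2 mu) (q : ℚ) :
    ((c • f : Lp ℂ 2 mu) : ℝ → ℂ) q = c * (f : ℝ → ℂ) q := by
  have h := coeFn_congr_rat (Lp.coeFn_smul c f) q
  rw [h]; simp

lemma inner_e (p : ℚ) (f : Lp ℂ 2 mu) : ⟪e p, f⟫_ℂ = (f : ℝ → ℂ) p := by
  rw [e, L2.inner_indicatorConstLp_one (measurableSet_singleton _) (mu_singleton_ne_top _) f]
  rw [integral_singleton, measureReal_def, mu_coe_singleton]
  simp

lemma inner_eq_zero_of (f g : Lp ℂ 2 mu)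
    (h : ∀ q : ℚ, (g : ℝ → ℂ) q = 0 ∨ (f : ℝ → ℂ) q = 0) : ⟪g, f⟫_ℂ = 0 := by
  rw [L2.inner_def]
  have hae : (fun x => ⟪(g : ℝ → ℂ) x, (f : ℝ → ℂ) x⟫_ℂ) =ᵐ[mu] (fun _ => (0 : ℂ)) :=
    ae_mu_iff.2 fun q => by
      show ⟪(g : ℝ → ℂ) q, (f : ℝ → ℂ) q⟫_ℂ = 0
      rcases h q with h' | h'
      · rw [h']; exact inner_zero_left _
      · rw [h']; exact inner_zero_right _
  rw [integral_congr_ae hae, integral_zero]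

lemma mem_vanishOn_iff {s : Set ℝ} (hs : MeasurableSet s) (f : Lp ℂ 2 mu) :
    f ∈ vanishOn mu s ↔ ∀ q : ℚ, (q : ℝ) ∈ s → (f : ℝ → ℂ) q = 0 := by
  have : f ∈ vanishOn mu s ↔ ∀ᵐ x ∂mu.restrict s, (f : ℝ → ℂ) x = 0 := Iff.rfl
  rw [this, ae_mu_restrict_iff hs]

lemma mem_orth_iff {s : Set ℝ} (hs : MeasurableSet s) (f : Lp ℂ 2 mu) :
    f ∈ (vanishOn mu s)ᗮ ↔ ∀ q : ℚ, (q : ℝ) ∉ s → (f : ℝ → ℂ) q = 0 := by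
  constructor
  · intro h q hq
    have he : e q ∈ vanishOn mu s := by
      rw [mem_vanishOn_iff hs]
      intro p hp
      rw [e_apply]
      have : p ≠ q := fun hpq => hq (hpq ▸ hp)
      simp [this]
    have h0 := (Submodule.mem_orthogonal _ f).1 h (e q) he
    rwa [inner_e] at h0
  · intro h
    rw [Submodule.mem_orthogonal]
    intro g hg
    refine inner_eq_zero_of f g fun q => ?_
    by_cases hq : (q : ℝ) ∈ s
    · exact Or.inl ((mem_vanishOn_iff hs g).1 hg q hq)
    · exact Or.inr (h q hq)

lemma proj_unique {S : Submodule ℂ (Lp ℂ 2 mu)} {f g₁ g₂ : Lp ℂ 2 mu}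
    (h1 : g₁ ∈ S) (h1' : f - g₁ ∈ Sᗮ) (h2 : g₂ ∈ S) (h2' : f - g₂ ∈ Sᗮ) : g₁ = g₂ := by
  have hd : g₁ - g₂ ∈ S := S.sub_mem h1 h2
  have hd' : g₁ - g₂ ∈ Sᗮ := by
    have := Sᗮ.sub_mem h2' h1'
    have heq : f - g₂ - (f - g₁) = g₁ - g₂ := by abel
    rwa [heq] at this
  have h0 : ⟪g₁ - g₂, g₁ - g₂⟫_ℂ = 0 := (Submodule.mem_orthogonal _ _).1 hd' _ hd
  have := inner_self_eq_zero.1 h0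
  exact sub_eq_zero.1 this

lemma commute_of_invariant {T P : Lp ℂ 2 mu →L[ℂ] Lp ℂ 2 mu} {S : Submodule ℂ (Lp ℂ 2 mu)}
    (hP : ∀ f, P f ∈ S ∧ f - P f ∈ Sᗮ)
    (h1 : ∀ f ∈ S, T f ∈ S) (h2 : ∀ f ∈ Sᗮ, T f ∈ Sᗮ) : T.comp P = P.comp T := by
  refine ContinuousLinearMap.ext fun f => ?_
  show T (P f) = P (T f)
  refine proj_unique (f := T f) (h1 _ (hP f).1) ?_ (hP (T f)).1 (hP (T f)).2
  have heq : T f - T (P f) = T (f - P f) := (map_sub T f (P f)).symm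
  rw [heq]
  exact h2 _ (hP f).2

end NestAux

open NestAux

/-- A bounded operator `T` on `H = L²(ℝ, μ)` commutes with the orthogonal projections
onto `S_t⁺` and `S_t⁻` for every `t` iff every `e_q` (`q ∈ ℚ`) is an eigenvector of `T`.
Here `Pp t` (resp. `Pm t`) is the orthogonal projection onto `S_t⁺` (resp. `S_t⁻`),
characterized by the property that it maps every `f` into the subspace with
`f - P f` orthogonal to the subspace. -/

theorem commutant_of_nest_one_iff_diagonal
    (Pp Pm : ℝ → (Lp ℂ 2 mu →L[ℂ] Lp ℂ 2 mu))
    (hPp : ∀ t f, Pp t f ∈ Splus t ∧ f - Pp t f ∈ (Splus t)ᗮ)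
    (hPm : ∀ t f, Pm t f ∈ Sminus t ∧ f - Pm t f ∈ (Sminus t)ᗮ)
    (T : Lp ℂ 2 mu →L[ℂ] Lp ℂ 2 mu) :
    ((∀ t : ℝ, T.comp (Pp t) = (Pp t).comp T) ∧
        (∀ t : ℝ, T.comp (Pm t) = (Pm t).comp T)) ↔
      ∀ q : ℚ, ∃ c : ℂ, T (e q) = c • e q := by
  classical
  constructor
  · rintro ⟨hp, hm⟩ q
    -- Pp q fixes e q
    have he_mem : e q ∈ Splus q := by
      rw [Splus, mem_vanishOn_iff measurableSet_Ioi]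
      intro p hp'
      rw [e_apply]
      have : p ≠ q := by
        intro h; subst h; exact lt_irrefl _ (Set.mem_Ioi.mp hp')
      simp [this]
    have he_orth : e q ∈ (Sminus q)ᗮ := by
      rw [Sminus, mem_orth_iff measurableSet_Ici]
      intro p hp'
      rw [e_apply]
      have : p ≠ q := by
        intro h; subst h; exact hp' (Set.mem_Ici.mpr le_rfl)
      simp [this]
    have hPpe : Pp q (e q) = e q := by
      refine proj_unique (f := e q) (hPp q (e q)).1 (hPp q (e q)).2 he_mem ?_
      rw [sub_self]; exact Submodule.zero_mem _
    have hPme : Pm q (e q) = 0 := by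
      refine proj_unique (f := e q) (hPm q (e q)).1 (hPm q (e q)).2 (Submodule.zero_mem _) ?_
      rw [sub_zero]; exact he_orth
    have hc1 : T (e q) ∈ Splus q := by
      have := congrArg (fun A : Lp ℂ 2 mu →L[ℂ] Lp ℂ 2 mu => A (e q)) (hp q)
      simp only [ContinuousLinearMap.comp_apply] at this
      rw [hPpe] at this
      rw [this]
      exact (hPp q (T (e q))).1
    have hc2 : T (e q) ∈ (Sminus q)ᗮ := by
      have := congrArg (fun A : Lp ℂ 2 mu →L[ℂ] Lp ℂ 2 mu => A (e q)) (hm q)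
      simp only [ContinuousLinearMap.comp_apply] at this
      rw [hPme, map_zero] at this
      have h2 := (hPm q (T (e q))).2
      rwa [← this, sub_zero] at h2
    refine ⟨(T (e q) : ℝ → ℂ) q, ?_⟩
    apply ext_rat
    intro p
    rw [smul_apply_rat, e_apply]
    by_cases hpq : p = q
    · subst hpq; simp
    · simp only [hpq, if_false, mul_zero]
      rcases lt_trichotomy (p : ℝ) (q : ℝ) with h | h | h
      · refine (mem_orth_iff measurableSet_Ici _).1 hc2 p ?_
        simp only [Set.mem_Ici, not_le]
        exact h
      · exact absurd (Rat.cast_injective h) hpq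
      · exact (mem_vanishOn_iff measurableSet_Ioi _).1 hc1 p h
  · intro h
    choose c hc using h
    have hadj : ∀ p : ℚ, (ContinuousLinearMap.adjoint T) (e p) = (conj (c p)) • e p := by
      intro p
      apply ext_rat
      intro q
      rw [smul_apply_rat]
      rw [← inner_e q, ContinuousLinearMap.adjoint_inner_right, hc q, inner_smul_left, inner_e]
      by_cases hqp : q = p
      · subst hqp; rfl
      · rw [e_apply]
        simp [hqp]
    have hdiag : ∀ (f : Lp ℂ 2 mu) (p : ℚ), (T f : ℝ → ℂ) p = c p * (f : ℝ → ℂ) p := by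
      intro f p
      rw [← inner_e p (T f), ← ContinuousLinearMap.adjoint_inner_left, hadj p,
        inner_smul_left, inner_e]
      simp
    constructor
    · intro t
      refine commute_of_invariant (hPp t) ?_ ?_
      · intro f hf
        rw [Splus, mem_vanishOn_iff measurableSet_Ioi] at hf ⊢
        intro q hq
        rw [hdiag, hf q hq, mul_zero]
      · intro f hf
        rw [Splus, mem_orth_iff measurableSet_Ioi] at hf ⊢
        intro q hq
        rw [hdiag, hf q hq, mul_zero]
    · intro t
      refine commute_of_invariant (hPm t) ?_ ?_
      · intro f hf
        rw [Sminus, mem_vanishOn_iff measurableSet_Ici] at hf ⊢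
        intro q hq
        rw [hdiag, hf q hq, mul_zero]
      · intro f hf
        rw [Sminus, mem_orth_iff measurableSet_Ici] at hf ⊢
        intro q hq
        rw [hdiag, hf q hq, mul_zero]
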